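/- Let Y be a closed subspace of c₀(ℤⁿ) contained in the set of Fourier coefficient sequences of L¹(𝕋ⁿ) functions. If Y is reflexive, then Y is finite dimensional. -/

import Mathlib

open MeasureTheory NormedSpace ZeroAtInfty

/-- A Banach space is reflexive if the canonical embedding into its bidual is
surjective. -/
def IsReflexiveSpace (W : Type*) [NormedAddCommGroup W] [NormedSpace ℂ W] : Prop :=
  Function.Surjective (inclusionInDoubleDual ℂ W)

/-- The fundamental cube `[-π,π)ⁿ` for the torus `𝕋ⁿ`. -/
def torusCube (n : ℕ) : Set (EuclideanSpace ℝ (Fin n)) :=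
  {x | ∀ k, x k ∈ Set.Ico (-Real.pi) Real.pi}

/-- The `ξ`-th Fourier coefficient of a function on the torus `𝕋ⁿ`,
`𝓕f(ξ) = ∫_{𝕋ⁿ} e^{-i⟨x,ξ⟩} f(x) dx`. -/
noncomputable def torusFourierCoeff {n : ℕ} (f : EuclideanSpace ℝ (Fin n) → ℂ)
    (ξ : Fin n → ℤ) : ℂ :=
  ∫ x in torusCube n,
    Complex.exp (-(Complex.I * (∑ k, x k * (ξ k : ℝ) : ℝ))) * f x

open Filter Topology

set_option maxHeartbeats 800000
set_option synthInstance.maxHeartbeats 800000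

namespace C0ReflAux

variable {n : ℕ}

lemma norm_apply_le (F : C₀(Fin n → ℤ, ℂ)) (ξ : Fin n → ℤ) : ‖F ξ‖ ≤ ‖F‖ := by
  rw [← ZeroAtInftyContinuousMap.norm_toBCF_eq_norm]
  exact F.toBCF.norm_coe_le_norm ξ

lemma norm_le_of_forall (F : C₀(Fin n → ℤ, ℂ)) {C : ℝ} (hC : 0 ≤ C)
    (h : ∀ ξ, ‖F ξ‖ ≤ C) : ‖F‖ ≤ C := by
  rw [← ZeroAtInftyContinuousMap.norm_toBCF_eq_norm]
  exact (BoundedContinuousFunction.norm_le hC).2 h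

/-- Outside a finite set, an element of `c₀(ℤⁿ)` is small. -/
lemma exists_tail (F : C₀(Fin n → ℤ, ℂ)) {ε : ℝ} (hε : 0 < ε) :
    ∃ E : Finset (Fin n → ℤ), ∀ ξ ∉ E, ‖F ξ‖ < ε := by
  have h : Filter.Tendsto F (Filter.cocompact (Fin n → ℤ)) (𝓝 0) :=
    ZeroAtInftyContinuousMapClass.zero_at_infty F
  have h2 : {ξ | F ξ ∈ Metric.ball (0 : ℂ) ε} ∈ Filter.cocompact (Fin n → ℤ) :=
    h (Metric.ball_mem_nhds 0 hε)
  obtain ⟨K, hK, hKsub⟩ := Filter.mem_cocompact.mp h2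
  refine ⟨hK.finite_of_discrete.toFinset, fun ξ hξ => ?_⟩
  have : ξ ∈ Kᶜ := by simpa using hξ
  simpa [mem_ball_zero_iff] using hKsub this

/-- Evaluation at a point, as a linear functional on a subspace of `c₀`. -/
noncomputable def evl (Y : Subspace ℂ C₀(Fin n → ℤ, ℂ)) (ξ : Fin n → ℤ) : ↥Y →ₗ[ℂ] ℂ where
  toFun F := (F : C₀(Fin n → ℤ, ℂ)) ξ
  map_add' F G := rfl
  map_smul' c F := rfl

/-- Evaluation at a point, as a continuous linear functional on a subspace of `c₀`. -/
noncomputable def ev (Y : Subspace ℂ C₀(Fin n → ℤ, ℂ)) (ξ : Fin n → ℤ) : ↥Y →L[ℂ] ℂ :=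
  ⟨evl Y ξ, by
    have h1 : Continuous fun F : C₀(Fin n → ℤ, ℂ) => F ξ := by
      have h2 : Continuous fun g : BoundedContinuousFunction (Fin n → ℤ) ℂ => g ξ :=
        continuous_eval_const ξ
      exact h2.comp (ZeroAtInftyContinuousMap.isometry_toBCF.continuous)
    exact h1.comp continuous_subtype_val⟩

@[simp] lemma ev_apply (Y : Subspace ℂ C₀(Fin n → ℤ, ℂ)) (ξ : Fin n → ℤ) (F : ↥Y) :
    ev Y ξ F = (F : C₀(Fin n → ℤ, ℂ)) ξ := rfl

/-- In an infinite-dimensional subspace of `c₀`, one can find a unit vector vanishing on any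
given finite set of coordinates, and a larger finite set outside which it is small. -/
lemma key (Y : Subspace ℂ C₀(Fin n → ℤ, ℂ)) (hY : ¬ FiniteDimensional ℂ ↥Y)
    (E : Finset (Fin n → ℤ)) {ε : ℝ} (hε : 0 < ε) :
    ∃ (F : ↥Y) (E' : Finset (Fin n → ℤ)), ‖F‖ = 1 ∧
      (∀ ξ ∈ E, (F : C₀(Fin n → ℤ, ℂ)) ξ = 0) ∧ E ⊆ E' ∧
      ∀ ξ ∉ E', ‖(F : C₀(Fin n → ℤ, ℂ)) ξ‖ ≤ ε := by
  classical
  set L : ↥Y →ₗ[ℂ] (↥E → ℂ) :=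
    LinearMap.pi (fun ξ : ↥E => (ev Y (ξ : Fin n → ℤ)).toLinearMap) with hL
  have hker : LinearMap.ker L ≠ ⊥ := by
    intro h
    letI : AddCommGroup ↥Y := Submodule.addCommGroup Y
    exact hY (FiniteDimensional.of_injective L (LinearMap.ker_eq_bot.mp h))
  obtain ⟨G, hGker, hG0⟩ := (Submodule.ne_bot_iff _).mp hker
  have hGn : ‖G‖ ≠ 0 := by simpa using hG0
  set F : ↥Y := ((‖G‖ : ℂ))⁻¹ • G with hF
  have hFnorm : ‖F‖ = 1 := by
    have h0 : ‖F‖ = ‖((‖G‖ : ℂ))⁻¹ • (G : C₀(Fin n → ℤ, ℂ))‖ := rfl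
    have h1 : ‖((‖G‖ : ℂ))⁻¹ • (G : C₀(Fin n → ℤ, ℂ))‖
        = ‖((‖G‖ : ℂ))⁻¹‖ * ‖(G : C₀(Fin n → ℤ, ℂ))‖ :=
      norm_smul ((‖G‖ : ℂ))⁻¹ (G : C₀(Fin n → ℤ, ℂ))
    have h2 : ‖((‖G‖ : ℂ))⁻¹‖ = ‖G‖⁻¹ := by
      rw [norm_inv, Complex.norm_real, norm_norm]
    have h3 : ‖(G : C₀(Fin n → ℤ, ℂ))‖ = ‖G‖ := rfl
    rw [h0, h1, h2, h3, inv_mul_cancel₀ hGn]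
  have hGzero : ∀ ξ ∈ E, (G : C₀(Fin n → ℤ, ℂ)) ξ = 0 := by
    intro ξ hξ
    have := LinearMap.mem_ker.mp hGker
    have h2 := congrFun this (⟨ξ, hξ⟩ : ↥E)
    simpa [hL, LinearMap.pi_apply] using h2
  have hFzero : ∀ ξ ∈ E, (F : C₀(Fin n → ℤ, ℂ)) ξ = 0 := by
    intro ξ hξ
    have : (F : C₀(Fin n → ℤ, ℂ)) ξ = ((‖G‖ : ℂ))⁻¹ * (G : C₀(Fin n → ℤ, ℂ)) ξ := rfl
    rw [this, hGzero ξ hξ, mul_zero]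
  obtain ⟨T, hT⟩ := exists_tail (F : C₀(Fin n → ℤ, ℂ)) hε
  refine ⟨F, E ∪ T, hFnorm, hFzero, Finset.subset_union_left, fun ξ hξ => ?_⟩
  have : ξ ∉ T := fun h => hξ (Finset.mem_union_right _ h)
  exact (hT ξ this).le

/-- Ultrafilter limits of bounded sequences in `ℂ` exist. -/
lemma exists_ulim (U : Ultrafilter ℕ) (c : ℕ → ℂ) {B : ℝ} (hB : ∀ N, ‖c N‖ ≤ B) :
    ∃ z : ℂ, Filter.Tendsto c (↑U) (𝓝 z) := by
  have hc : ↑(U.map c) ≤ Filter.principal (Metric.closedBall (0 : ℂ) B) := by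
    rw [Ultrafilter.coe_map, Filter.le_principal_iff, Filter.mem_map]
    exact Filter.univ_mem' (fun N => by simpa [Metric.mem_closedBall, dist_zero_right] using hB N)
  obtain ⟨z, _, hz⟩ := (isCompact_closedBall (0 : ℂ) B).ultrafilter_le_nhds (U.map c) hc
  refine ⟨z, ?_⟩
  rw [Filter.Tendsto, ← Ultrafilter.coe_map]
  exact hz

end C0ReflAux

open C0ReflAux

set_option maxHeartbeats 1000000 in
/-- A reflexive closed subspace of `c₀(ℤⁿ)` consisting of Fourier coefficient
sequences of `L¹(𝕋ⁿ)` functions is finite dimensional. -/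
theorem finiteDimensional_of_reflexive_torus_fourier_subspace {n : ℕ}
    (Y : Subspace ℂ C₀(Fin n → ℤ, ℂ))
    (hclosed : IsClosed (Y : Set C₀(Fin n → ℤ, ℂ)))
    (hsub : ∀ F ∈ Y, ∃ f : EuclideanSpace ℝ (Fin n) → ℂ,
      IntegrableOn f (torusCube n) ∧ ∀ ξ, F ξ = torusFourierCoeff f ξ)
    (hrefl : IsReflexiveSpace ↥Y) :
    FiniteDimensional ℂ ↥Y := by
  classical
  by_contra hY
  -- the sequence of smallness parameters
  set ε : ℕ → ℝ := fun k => (1 / (2 : ℝ)) ^ k / 8 with hεdef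
  have hεpos : ∀ k, 0 < ε k := fun k => by positivity
  have hεsum : ∀ N : ℕ, ∑ k ∈ Finset.range N, ε k ≤ 4⁻¹ := by
    intro N
    have h := sum_geometric_two_le N
    have : ∑ k ∈ Finset.range N, ε k = (∑ k ∈ Finset.range N, (1 / (2 : ℝ)) ^ k) / 8 := by
      rw [Finset.sum_div]
    rw [this]
    linarith
  have hεsmall : ∀ k, ε k ≤ 8⁻¹ := by
    intro k
    have h1 : (1 / (2 : ℝ)) ^ k ≤ 1 := pow_le_one₀ (by norm_num) (by norm_num)
    have h2 : ε k = (1 / (2 : ℝ)) ^ k / 8 := rfl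
    rw [h2]
    linarith
  -- the recursive gliding-hump construction
  choose FF EE hnorm hzero hsubE htail using
    fun (E : Finset (Fin n → ℤ)) (k : ℕ) => key Y hY E (hεpos k)
  let g : ℕ → ↥Y × Finset (Fin n → ℤ) := fun m =>
    Nat.rec (⟨FF ∅ 0, EE ∅ 0⟩) (fun k p => ⟨FF p.2 (k + 1), EE p.2 (k + 1)⟩) m
  let FY : ℕ → ↥Y := fun k => (g k).1
  let Ef : ℕ → Finset (Fin n → ℤ) := fun k => (g k).2
  have hFY0 : FY 0 = FF ∅ 0 := rfl
  have hEf0 : Ef 0 = EE ∅ 0 := rfl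
  have hFYs : ∀ k, FY (k + 1) = FF (Ef k) (k + 1) := fun k => rfl
  have hEfs : ∀ k, Ef (k + 1) = EE (Ef k) (k + 1) := fun k => rfl
  have hFnorm : ∀ k, ‖FY k‖ = 1 := by
    intro k
    cases k with
    | zero => exact hnorm ∅ 0
    | succ k => exact hnorm (Ef k) (k + 1)
  have hFtail : ∀ k, ∀ ξ ∉ Ef k, ‖(FY k : C₀(Fin n → ℤ, ℂ)) ξ‖ ≤ ε k := by
    intro k
    cases k with
    | zero => exact htail ∅ 0
    | succ k => exact htail (Ef k) (k + 1)
  have hmono : ∀ k, Ef k ⊆ Ef (k + 1) := by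
    intro k
    rw [hEfs k]
    exact hsubE (Ef k) (k + 1)
  have hmono' : ∀ k l, k ≤ l → Ef k ⊆ Ef l := by
    intro k l h
    induction l, h using Nat.le_induction with
    | base => exact subset_rfl
    | succ l hkl ih => exact ih.trans (hmono l)
  have hzero' : ∀ k, ∀ ξ ∈ Ef k, (FY (k + 1) : C₀(Fin n → ℤ, ℂ)) ξ = 0 := by
    intro k
    exact hzero (Ef k) (k + 1)
  have hzero'' : ∀ k l, k < l → ∀ ξ ∈ Ef k, (FY l : C₀(Fin n → ℤ, ℂ)) ξ = 0 := by
    intro k l hkl ξ hξ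
    obtain ⟨m, rfl⟩ := Nat.exists_eq_add_of_le hkl
    have h0 : k + 1 + m = (k + m) + 1 := by omega
    rw [h0]
    exact hzero' (k + m) ξ (hmono' k (k + m) (Nat.le_add_right k m) hξ)
  -- the partial sums
  set GY : ℕ → ↥Y := fun N => ∑ k ∈ Finset.range (N + 1), FY k with hGYdef
  have hGY_apply : ∀ N ξ, (GY N : C₀(Fin n → ℤ, ℂ)) ξ =
      ∑ k ∈ Finset.range (N + 1), (FY k : C₀(Fin n → ℤ, ℂ)) ξ := by
    intro N ξ
    have h := map_sum
      (AddMonoidHom.mk' (fun (F : C₀(Fin n → ℤ, ℂ)) => F ξ) (fun a b => rfl))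
      (fun k => (FY k : C₀(Fin n → ℤ, ℂ))) (Finset.range (N + 1))
    have hcoe : ((GY N : C₀(Fin n → ℤ, ℂ))) =
        ∑ k ∈ Finset.range (N + 1), (FY k : C₀(Fin n → ℤ, ℂ)) := by
      simp only [hGYdef]
      exact AddSubmonoidClass.coe_finset_sum _ _
    rw [hcoe]
    exact h
  -- the partial sums are uniformly bounded
  have hGbound : ∀ N, ‖GY N‖ ≤ 2 := by
    intro N
    have hnc : ‖GY N‖ = ‖(GY N : C₀(Fin n → ℤ, ℂ))‖ := rfl
    rw [hnc]
    refine norm_le_of_forall _ (by norm_num) (fun ξ => ?_)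
    -- find the "special" index j at ξ
    have hj : ∃ j : ℕ, ∀ k, ‖(FY k : C₀(Fin n → ℤ, ℂ)) ξ‖ ≤ ε k + (if k = j then 1 else 0) := by
      by_cases hmem : ∃ k, ξ ∈ Ef k
      · set j := Nat.find hmem with hjdef
        refine ⟨j, fun k => ?_⟩
        rcases lt_trichotomy k j with h | h | h
        · have hnot : ξ ∉ Ef k := Nat.find_min hmem h
          have := hFtail k ξ hnot
          have hif : (0 : ℝ) ≤ if k = j then 1 else 0 := by positivity
          linarith
        · have h1 : ‖(FY k : C₀(Fin n → ℤ, ℂ)) ξ‖ ≤ ‖(FY k : C₀(Fin n → ℤ, ℂ))‖ :=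
            norm_apply_le _ ξ
          have h2 : ‖(FY k : C₀(Fin n → ℤ, ℂ))‖ = 1 := hFnorm k
          have h3 : (0 : ℝ) < ε k := hεpos k
          rw [if_pos h]
          linarith
        · have hmemj : ξ ∈ Ef j := Nat.find_spec hmem
          have := hzero'' j k h ξ hmemj
          rw [this]
          have hif : (0 : ℝ) ≤ if k = j then 1 else 0 := by positivity
          simp only [norm_zero]
          have := (hεpos k).le
          linarith
      · push_neg at hmem
        refine ⟨0, fun k => ?_⟩
        have := hFtail k ξ (hmem k)
        have hif : (0 : ℝ) ≤ if k = 0 then 1 else 0 := by positivity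
        linarith
    obtain ⟨j, hj⟩ := hj
    calc ‖(GY N : C₀(Fin n → ℤ, ℂ)) ξ‖
        = ‖∑ k ∈ Finset.range (N + 1), (FY k : C₀(Fin n → ℤ, ℂ)) ξ‖ := by rw [hGY_apply]
      _ ≤ ∑ k ∈ Finset.range (N + 1), ‖(FY k : C₀(Fin n → ℤ, ℂ)) ξ‖ := norm_sum_le _ _
      _ ≤ ∑ k ∈ Finset.range (N + 1), (ε k + if k = j then 1 else 0) :=
          Finset.sum_le_sum (fun k _ => hj k)
      _ = (∑ k ∈ Finset.range (N + 1), ε k)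
            + ∑ k ∈ Finset.range (N + 1), (if k = j then (1 : ℝ) else 0) :=
          Finset.sum_add_distrib
      _ ≤ 4⁻¹ + 1 := by
          refine add_le_add (hεsum (N + 1)) ?_
          rw [Finset.sum_ite_eq' (Finset.range (N + 1)) j (fun _ => (1 : ℝ))]
          split_ifs <;> norm_num
      _ ≤ 2 := by norm_num
  -- choose witnesses of the norms of each FY k
  have hsel : ∀ k, ∃ ξ, 3 / 4 < ‖(FY k : C₀(Fin n → ℤ, ℂ)) ξ‖ := by
    intro k
    by_contra h
    push_neg at h
    have := norm_le_of_forall (FY k : C₀(Fin n → ℤ, ℂ)) (by norm_num) h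
    have h2 : ‖(FY k : C₀(Fin n → ℤ, ℂ))‖ = 1 := hFnorm k
    linarith
  choose ξs hξs using hsel
  have hξmem : ∀ k, ξs k ∈ Ef k := by
    intro k
    by_contra h
    have := hFtail k (ξs k) h
    have h2 := hξs k
    have h3 := hεsmall k
    linarith
  have hξnot : ∀ k, ξs (k + 1) ∉ Ef k := by
    intro k h
    have := hzero' k (ξs (k + 1)) h
    have h2 := hξs (k + 1)
    rw [this] at h2
    simp at h2
    linarith
  -- the lower bound for the partial sums at the selected coordinates
  have hlower : ∀ k N, k + 1 ≤ N → 2⁻¹ ≤ ‖(GY N : C₀(Fin n → ℤ, ℂ)) (ξs (k + 1))‖ := by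
    intro k N hkN
    set ξ := ξs (k + 1) with hξdef
    set K := k + 1 with hKdef
    have hKmem : K ∈ Finset.range (N + 1) := Finset.mem_range.mpr (by omega)
    have hsum : (GY N : C₀(Fin n → ℤ, ℂ)) ξ = (FY K : C₀(Fin n → ℤ, ℂ)) ξ
        + ∑ m ∈ (Finset.range (N + 1)).erase K, (FY m : C₀(Fin n → ℤ, ℂ)) ξ := by
      rw [hGY_apply]
      exact (Finset.add_sum_erase _ _ hKmem).symm
    have hrest : ‖∑ m ∈ (Finset.range (N + 1)).erase K, (FY m : C₀(Fin n → ℤ, ℂ)) ξ‖ ≤ 4⁻¹ := by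
      calc ‖∑ m ∈ (Finset.range (N + 1)).erase K, (FY m : C₀(Fin n → ℤ, ℂ)) ξ‖
          ≤ ∑ m ∈ (Finset.range (N + 1)).erase K, ‖(FY m : C₀(Fin n → ℤ, ℂ)) ξ‖ :=
            norm_sum_le _ _
        _ ≤ ∑ m ∈ (Finset.range (N + 1)).erase K, ε m := by
            refine Finset.sum_le_sum (fun m hm => ?_)
            have hmne : m ≠ K := Finset.ne_of_mem_erase hm
            rcases lt_or_gt_of_ne hmne with h | h
            · -- m < K = k+1, so m ≤ k ; ξ ∉ Ef k ⊇ Ef m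
              have hm_le : m ≤ k := by omega
              have : ξ ∉ Ef m := fun hmm => hξnot k (hmono' m k hm_le hmm)
              exact hFtail m ξ this
            · -- m > K ; ξ ∈ Ef K so FY m vanishes at ξ
              have : (FY m : C₀(Fin n → ℤ, ℂ)) ξ = 0 := hzero'' K m h ξ (hξmem K)
              rw [this, norm_zero]
              exact (hεpos m).le
        _ ≤ ∑ m ∈ Finset.range (N + 1), ε m :=
            Finset.sum_le_sum_of_subset_of_nonneg (Finset.erase_subset _ _)
              (fun m _ _ => (hεpos m).le)
        _ ≤ 4⁻¹ := hεsum (N + 1)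
    have hbig : 3 / 4 < ‖(FY K : C₀(Fin n → ℤ, ℂ)) ξ‖ := hξs K
    have h1 : ‖(FY K : C₀(Fin n → ℤ, ℂ)) ξ‖ ≤ ‖(GY N : C₀(Fin n → ℤ, ℂ)) ξ‖
        + ‖∑ m ∈ (Finset.range (N + 1)).erase K, (FY m : C₀(Fin n → ℤ, ℂ)) ξ‖ := by
      have : (FY K : C₀(Fin n → ℤ, ℂ)) ξ = (GY N : C₀(Fin n → ℤ, ℂ)) ξ
          - ∑ m ∈ (Finset.range (N + 1)).erase K, (FY m : C₀(Fin n → ℤ, ℂ)) ξ := by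
        rw [hsum]; ring
      rw [this]
      exact norm_sub_le _ _
    linarith
  -- an ultrafilter refining `atTop`
  obtain ⟨U, hU⟩ : ∃ U : Ultrafilter ℕ, (↑U : Filter ℕ) ≤ atTop :=
    ⟨Ultrafilter.of atTop, Ultrafilter.of_le _⟩
  -- ultrafilter limits of `φ (GY N)` define an element of the bidual
  letI : NormedAddCommGroup ↥Y := Submodule.normedAddCommGroup Y
  letI : NormedSpace ℂ ↥Y := inferInstance
  have hlim : ∀ φ : StrongDual ℂ ↥Y, ∃ z : ℂ, Tendsto (fun N => φ (GY N)) (↑U) (𝓝 z) := by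
    intro φ
    refine exists_ulim U _ (B := 2 * ‖φ‖) (fun N => ?_)
    calc ‖φ (GY N)‖ ≤ ‖φ‖ * ‖GY N‖ := φ.le_opNorm _
      _ ≤ ‖φ‖ * 2 := by
          have := hGbound N
          have h0 : (0 : ℝ) ≤ ‖φ‖ := norm_nonneg _
          nlinarith
      _ = 2 * ‖φ‖ := by ring
  choose z hz using hlim
  have hzadd : ∀ φ ψ : StrongDual ℂ ↥Y, z (φ + ψ) = z φ + z ψ := by
    intro φ ψ
    refine tendsto_nhds_unique (hz (φ + ψ)) ?_
    have := (hz φ).add (hz ψ)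
    simpa using this
  have hzsmul : ∀ (c : ℂ) (φ : StrongDual ℂ ↥Y), z (c • φ) = c • z φ := by
    intro c φ
    refine tendsto_nhds_unique (hz (c • φ)) ?_
    have := (hz φ).const_smul c
    simpa using this
  have hΛbound : ∀ φ : StrongDual ℂ ↥Y, ‖z φ‖ ≤ 2 * ‖φ‖ := by
    intro φ
    refine le_of_tendsto (hz φ).norm (Filter.Eventually.of_forall (fun N => ?_))
    calc ‖φ (GY N)‖ ≤ ‖φ‖ * ‖GY N‖ := φ.le_opNorm _
      _ ≤ ‖φ‖ * 2 := by
          have := hGbound N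
          have h0 : (0 : ℝ) ≤ ‖φ‖ := norm_nonneg _
          nlinarith
      _ = 2 * ‖φ‖ := by ring
  let Λlin : StrongDual ℂ ↥Y →ₗ[ℂ] ℂ :=
    { toFun := z
      map_add' := hzadd
      map_smul' := hzsmul }
  let Λ : StrongDual ℂ (StrongDual ℂ ↥Y) := ⟨Λlin, AddMonoidHomClass.continuous_of_bound Λlin 2 hΛbound⟩
  -- reflexivity produces a preimage `F` in `Y`
  obtain ⟨F, hF⟩ := hrefl Λ
  have hFev : ∀ φ : StrongDual ℂ ↥Y, φ F = z φ := by
    intro φ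
    calc φ F = inclusionInDoubleDual ℂ ↥Y F φ := (NormedSpace.dual_def ℂ ↥Y F φ).symm
      _ = Λ φ := by rw [hF]
      _ = z φ := rfl
  -- `F` is the pointwise ultrafilter limit of the `GY N`
  have hFlim : ∀ ξ, Tendsto (fun N => (GY N : C₀(Fin n → ℤ, ℂ)) ξ) (↑U)
      (𝓝 ((F : C₀(Fin n → ℤ, ℂ)) ξ)) := by
    intro ξ
    have h1 : (F : C₀(Fin n → ℤ, ℂ)) ξ = z (ev Y ξ) := by
      rw [← ev_apply Y ξ F]
      exact hFev (ev Y ξ)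
    rw [h1]
    have h2 := hz (ev Y ξ)
    simp only [ev_apply] at h2
    exact h2
  -- hence `‖F‖ ≥ 1/2` at the infinitely many distinct selected coordinates
  have hFbig : ∀ k, 2⁻¹ ≤ ‖(F : C₀(Fin n → ℤ, ℂ)) (ξs (k + 1))‖ := by
    intro k
    refine ge_of_tendsto (hFlim (ξs (k + 1))).norm ?_
    have hat : ∀ᶠ N in (atTop : Filter ℕ),
        2⁻¹ ≤ ‖(GY N : C₀(Fin n → ℤ, ℂ)) (ξs (k + 1))‖ :=
      Filter.eventually_atTop.mpr ⟨k + 1, fun N hN => hlower k N hN⟩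
    exact hat.filter_mono hU
  -- but `F` vanishes at infinity: contradiction
  obtain ⟨E, hE⟩ := exists_tail (F : C₀(Fin n → ℤ, ℂ)) (show (0 : ℝ) < 2⁻¹ by norm_num)
  have hne : ∀ k l, k < l → ξs (k + 1) ≠ ξs (l + 1) := by
    intro k l hkl heq
    have h1 : ξs (k + 1) ∈ Ef (k + 1) := hξmem (k + 1)
    have h2 : ξs (k + 1) ∈ Ef l := hmono' (k + 1) l (by omega) h1
    rw [heq] at h2
    exact hξnot l h2
  have hinj : Function.Injective (fun k => ξs (k + 1)) := by
    intro k l heq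
    by_contra hkl
    rcases lt_or_gt_of_ne hkl with h | h
    · exact hne k l h heq
    · exact hne l k h heq.symm
  have hmemE : ∀ k, ξs (k + 1) ∈ (E : Set (Fin n → ℤ)) := by
    intro k
    by_contra h
    have h2 : ξs (k + 1) ∉ E := fun hh => h hh
    have := hE _ h2
    have := hFbig k
    linarith
  exact Set.infinite_of_injective_forall_mem hinj hmemE E.finite_toSet
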